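/- In the good (value) setting, an allocation rule x admits a payment scheme p such that the mechanism (x,p) is truthful if and only if x satisfies the monotonicity property: x_i(a, s_{-i}) ≤ x_i(b, s_{-i}) for all agents i, all s_{-i} ∈ [k]^{n-1}, and all (a,b) ∈ σ_i(s_{-i}), i.e., whenever v_i(a, s_{-i}) < v_i(b, s_{-i}). -/
import Mathlib

open MeasureTheory intervalIntegral Set

/-- In the value (good) setting, an allocation rule admits payments making the
mechanism truthful (IC and IR) iff it is monotone with respect to the signal orderings induced
by the value functions. -/
theorem stmt1 (n k : ℕ)
    (v : Fin n → (Fin n → Fin k) → ℝ) (hv : ∀ i s, 0 < v i s)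
    (x : Fin n → (Fin n → Fin k) → ℝ)
    (hx01 : ∀ i s, 0 ≤ x i s ∧ x i s ≤ 1)
    (hxsum : ∀ s, ∑ i, x i s = 1) :
    (∃ p : Fin n → (Fin n → Fin k) → ℝ,
      (∀ i s, 0 ≤ p i s) ∧
      (∀ (s : Fin n → Fin k) (i : Fin n) (b : Fin k),
        x i (Function.update s i b) * v i s - p i (Function.update s i b)
          ≤ x i s * v i s - p i s) ∧
      (∀ (s : Fin n → Fin k) (i : Fin n), 0 ≤ x i s * v i s - p i s)) ↔
    (∀ (i : Fin n) (s : Fin n → Fin k) (a b : Fin k),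
      v i (Function.update s i a) < v i (Function.update s i b) →
      x i (Function.update s i a) ≤ x i (Function.update s i b)) := by
  constructor
  · rintro ⟨p, _, hic, _⟩ i s a b hab
    have h1 := hic (Function.update s i a) i b
    have h2 := hic (Function.update s i b) i a
    rw [Function.update_idem] at h1 h2
    nlinarith
  · intro hmono
    rcases Nat.eq_zero_or_pos n with hn | hn
    · exfalso
      subst hn
      have := hxsum (fun i => i.elim0)
      simp at this
    rcases Nat.eq_zero_or_pos k with hk | hk
    · subst hk
      exact ⟨fun _ _ => 0, fun _ s => absurd (s ⟨0, hn⟩).isLt (Nat.not_lt_zero _),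
        fun s => absurd (s ⟨0, hn⟩).isLt (Nat.not_lt_zero _),
        fun s => absurd (s ⟨0, hn⟩).isLt (Nat.not_lt_zero _)⟩
    haveI : NeZero k := ⟨hk.ne'⟩
    have hne : (Finset.univ : Finset (Fin k)).Nonempty := Finset.univ_nonempty
    -- the "cumulative allocation" function
    set X : Fin n → (Fin n → Fin k) → ℝ → ℝ := fun i s z =>
      Finset.univ.sup' hne (fun c : Fin k =>
        if v i (Function.update s i c) < z then x i (Function.update s i c) else 0) with hX
    have hXnn : ∀ i s z, 0 ≤ X i s z := by
      intro i s z
      rcases hne with ⟨c0, _⟩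
      refine le_trans ?_ (Finset.le_sup' _ (Finset.mem_univ c0))
      split <;> [exact (hx01 i _).1; exact le_refl 0]
    have hXub : ∀ i s z (B : ℝ), 0 ≤ B →
        (∀ c, v i (Function.update s i c) < z → x i (Function.update s i c) ≤ B) →
        X i s z ≤ B := by
      intro i s z B hB hC
      refine Finset.sup'_le _ _ fun c _ => ?_
      split
      · exact hC c (by assumption)
      · exact hB
    have hXlb : ∀ i s z c, v i (Function.update s i c) < z →
        x i (Function.update s i c) ≤ X i s z := by
      intro i s z c hc
      refine le_trans ?_ (Finset.le_sup' _ (Finset.mem_univ c))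
      rw [if_pos hc]
    have hXmono : ∀ i s, Monotone (X i s) := by
      intro i s z1 z2 hz
      refine Finset.sup'_le _ _ fun c _ => ?_
      refine le_trans ?_ (Finset.le_sup' _ (Finset.mem_univ c))
      split
      · rw [if_pos (by linarith)]
      · split <;> [exact (hx01 i _).1; exact le_refl 0]
    have hXupd : ∀ i s b, X i (Function.update s i b) = X i s := by
      intro i s b
      funext z
      simp only [hX, Function.update_idem]
    have hXint : ∀ i s (a b : ℝ), IntervalIntegrable (X i s) volume a b :=
      fun i s a b => (hXmono i s).intervalIntegrable
    -- the utility and payment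
    set u : Fin n → (Fin n → Fin k) → ℝ := fun i s => ∫ z in (0:ℝ)..(v i s), X i s z with hu
    have hunn : ∀ i s, 0 ≤ u i s := by
      intro i s
      exact integral_nonneg (hv i s).le fun z _ => hXnn i s z
    have hub : ∀ i s, u i s ≤ x i s * v i s := by
      intro i s
      have h1 : u i s ≤ ∫ _ in (0:ℝ)..(v i s), x i s := by
        refine integral_mono_on (hv i s).le (hXint i s _ _) intervalIntegrable_const ?_
        intro z hz
        refine hXub i s z _ (hx01 i s).1 fun c hc => ?_
        have hlt : v i (Function.update s i c) < v i s := lt_of_lt_of_le hc hz.2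
        have := hmono i s c (s i) (by rwa [Function.update_eq_self])
        rwa [Function.update_eq_self] at this
      rw [intervalIntegral.integral_const, smul_eq_mul, sub_zero] at h1
      linarith
    refine ⟨fun i s => x i s * v i s - u i s, ?_, ?_, ?_⟩
    · intro i s
      have := hub i s
      simp only
      linarith
    · intro s i b
      simp only
      have hdiff : u i (Function.update s i b) - u i s
          = ∫ z in (v i s)..(v i (Function.update s i b)), X i s z := by
        rw [hu]
        simp only [hXupd i s b]
        exact integral_interval_sub_left (hXint i s _ _) (hXint i s _ _)
      have key : u i (Function.update s i b) - u i s
          ≤ x i (Function.update s i b) * (v i (Function.update s i b) - v i s) := by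
        rw [hdiff]
        rcases le_or_gt (v i s) (v i (Function.update s i b)) with hle | hlt
        · have h1 : (∫ z in (v i s)..(v i (Function.update s i b)), X i s z)
              ≤ ∫ _ in (v i s)..(v i (Function.update s i b)), x i (Function.update s i b) := by
            refine integral_mono_on hle (hXint i s _ _) intervalIntegrable_const ?_
            intro z hz
            refine hXub i s z _ (hx01 i _).1 fun c hc => ?_
            exact hmono i s c b (lt_of_lt_of_le hc hz.2)
          rw [intervalIntegral.integral_const, smul_eq_mul] at h1
          linarith [h1]
        · have h1 : x i (Function.update s i b) * (v i s - v i (Function.update s i b))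
              ≤ ∫ z in (v i (Function.update s i b))..(v i s), X i s z := by
            have h2 : (∫ _ in (v i (Function.update s i b))..(v i s),
                x i (Function.update s i b)) ≤ ∫ z in (v i (Function.update s i b))..(v i s),
                X i s z := by
              refine integral_mono_ae_restrict hlt.le intervalIntegrable_const (hXint i s _ _) ?_
              rw [Filter.EventuallyLE, ae_restrict_iff' measurableSet_Icc]
              have hnull : {z : ℝ | ¬ (z ∈ Icc (v i (Function.update s i b)) (v i s) →
                  x i (Function.update s i b) ≤ X i s z)} ⊆ {v i (Function.update s i b)} := by
                intro z hz
                simp only [mem_setOf_eq, Classical.not_imp] at hz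
                obtain ⟨hz1, hz2⟩ := hz
                by_contra hzz
                have : v i (Function.update s i b) < z :=
                  lt_of_le_of_ne hz1.1 (fun h => hzz (by simp [← h]))
                exact hz2 (hXlb i s z b this)
              refine measure_mono_null hnull ?_
              exact Real.volume_singleton
            rw [intervalIntegral.integral_const, smul_eq_mul] at h2
            linarith
          rw [integral_symm]
          linarith
      linarith
    · intro s i
      simp only
      linarith [hunn i s]
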